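/- For Clifford numbers a and b in the Clifford algebra R_{0,n}, if b satisfies b * conj(b) = |b|^2 (where |·| is the Euclidean norm on coefficients and conj is Clifford conjugation), then |a*b| = |a|·|b|. -/

import Mathlib

/-- The real Clifford algebra `ℝ_{0,n}`, modelled concretely on its basis
`{e_α : α ⊆ {1,…,n}}` as coefficient functions `Finset (Fin n) → ℝ`. -/
abbrev CliffAlg (n : ℕ) := Finset (Fin n) → ℝ

/-- The sign occurring in the product of basis elements `e_S * e_T`
(coming from `e_i² = -1` and `e_i e_j = -e_j e_i` for `i ≠ j`). -/
def csign {n : ℕ} (S T : Finset (Fin n)) : ℝ :=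
  (-1 : ℝ) ^ ((∑ t ∈ T, (S.filter fun s => t < s).card) + (S ∩ T).card)

/-- Clifford multiplication on `ℝ_{0,n}`: `e_S e_T = csign S T • e_{S ∆ T}`. -/
def cmul {n : ℕ} (a b : CliffAlg n) : CliffAlg n := fun U =>
  ∑ S : Finset (Fin n), ∑ T : Finset (Fin n),
    (if symmDiff S T = U then a S * b T * csign S T else 0)

/-- The unit `1 = e_∅` of the Clifford algebra. -/
def cone {n : ℕ} : CliffAlg n := fun S => if S = (∅ : Finset (Fin n)) then 1 else 0

/-- Clifford conjugation `a ↦ ā` (on the basis, `ē_α = (-1)^{k(k+1)/2} e_α` for `k = |α|`). -/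
def cconj {n : ℕ} (a : CliffAlg n) : CliffAlg n := fun S =>
  (-1 : ℝ) ^ (S.card * (S.card + 1) / 2) * a S

/-- The Euclidean norm of the coefficients, `|a| = (∑_α a_α²)^{1/2}`. -/
noncomputable def cnorm {n : ℕ} (a : CliffAlg n) : ℝ :=
  Real.sqrt (∑ S : Finset (Fin n), a S ^ 2)

/-- The real (scalar) part of a Clifford number. -/
def cre {n : ℕ} (a : CliffAlg n) : ℝ := a ∅

/-- Positive semidefinite Clifford numbers: those of the form `a = b b̄`. -/
def CPos {n : ℕ} (a : CliffAlg n) : Prop := ∃ b : CliffAlg n, a = cmul b (cconj b)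

/-- The purely imaginary paravector `Σ i, v i • e_i`. -/
def cvec {n : ℕ} (v : Fin n → ℝ) : CliffAlg n := fun S =>
  ∑ i : Fin n, if S = {i} then v i else 0




open Finset

variable {n : ℕ}

def esign (S T : Finset (Fin n)) : ℝ :=
  ∏ s ∈ S, ∏ t ∈ T, (if t ≤ s then (-1 : ℝ) else 1)

lemma ite_sq (P : Prop) [Decidable P] :
    (if P then (-1:ℝ) else 1) * (if P then (-1:ℝ) else 1) = 1 := by
  split <;> norm_num

lemma prod_sq_one {α : Type*} (s : Finset α) (f : α → ℝ) (h : ∀ x, f x * f x = 1) :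
    (∏ x ∈ s, f x) * (∏ x ∈ s, f x) = 1 := by
  rw [← Finset.prod_mul_distrib]
  exact Finset.prod_eq_one fun x _ => h x

lemma esign_mul_self (S T : Finset (Fin n)) : esign S T * esign S T = 1 :=
  prod_sq_one _ _ fun s => prod_sq_one _ _ fun t => ite_sq _

lemma prod_symmDiff {α : Type*} [DecidableEq α] (A B : Finset α) (f : α → ℝ)
    (h : ∀ x, f x * f x = 1) :
    ∏ x ∈ symmDiff A B, f x = (∏ x ∈ A, f x) * ∏ x ∈ B, f x := by
  have hA : (∏ x ∈ A \ B, f x) * ∏ x ∈ A ∩ B, f x = ∏ x ∈ A, f x := by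
    rw [← Finset.prod_union (Finset.disjoint_sdiff_inter A B), Finset.sdiff_union_inter]
  have hB : (∏ x ∈ B \ A, f x) * ∏ x ∈ A ∩ B, f x = ∏ x ∈ B, f x := by
    rw [Finset.inter_comm, ← Finset.prod_union (Finset.disjoint_sdiff_inter B A),
      Finset.sdiff_union_inter]
  have hsd : symmDiff A B = (A \ B) ∪ (B \ A) := by
    ext x; simp [Finset.mem_symmDiff, Finset.mem_union, Finset.mem_sdiff]
  have hq := prod_sq_one (A ∩ B) f h
  rw [hsd, Finset.prod_union (disjoint_sdiff_sdiff), ← hA, ← hB]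
  linear_combination (-((∏ x ∈ A \ B, f x) * (∏ x ∈ B \ A, f x))) * hq

lemma esign_symmDiff_left (A B C : Finset (Fin n)) :
    esign (symmDiff A B) C = esign A C * esign B C :=
  prod_symmDiff A B _ fun s => prod_sq_one _ _ fun t => ite_sq _

lemma esign_symmDiff_right (A B C : Finset (Fin n)) :
    esign A (symmDiff B C) = esign A B * esign A C := by
  unfold esign
  rw [← Finset.prod_mul_distrib]
  exact Finset.prod_congr rfl fun s _ => prod_symmDiff B C _ fun t => ite_sq _

lemma esign_empty_right (S : Finset (Fin n)) : esign S ∅ = 1 := by simp [esign]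

-- filter of ≤ vs <
lemma filter_le_card (t : Fin n) (S : Finset (Fin n)) :
    (S.filter fun s => t ≤ s).card
      = (S.filter fun s => t < s).card + (if t ∈ S then 1 else 0) := by
  by_cases ht : t ∈ S
  · have : S.filter (fun s => t ≤ s) = insert t (S.filter fun s => t < s) := by
      ext x
      simp only [Finset.mem_filter, Finset.mem_insert]
      constructor
      · rintro ⟨hx, hle⟩
        rcases eq_or_lt_of_le hle with h | h
        · exact Or.inl h.symm
        · exact Or.inr ⟨hx, h⟩
      · rintro (rfl | ⟨hx, hlt⟩)
        · exact ⟨ht, le_refl _⟩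
        · exact ⟨hx, le_of_lt hlt⟩
    rw [this, Finset.card_insert_of_notMem (by simp), if_pos ht]
  · have : S.filter (fun s => t ≤ s) = S.filter fun s => t < s := by
      ext x
      simp only [Finset.mem_filter]
      constructor
      · rintro ⟨hx, hle⟩
        exact ⟨hx, lt_of_le_of_ne hle (by rintro rfl; exact ht hx)⟩
      · rintro ⟨hx, hlt⟩; exact ⟨hx, le_of_lt hlt⟩
    rw [this, if_neg ht, add_zero]

lemma csign_eq_esign (S T : Finset (Fin n)) : csign S T = esign S T := by
  unfold csign esign
  rw [Finset.prod_comm]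
  have hpt : ∀ t ∈ T, (∏ s ∈ S, (if t ≤ s then (-1:ℝ) else 1))
      = (-1:ℝ) ^ (S.filter fun s => t < s).card * (if t ∈ S then (-1:ℝ) else 1) := by
    intro t _
    rw [Finset.prod_ite (f := fun _ => (-1:ℝ)) (g := fun _ => (1:ℝ)),
      Finset.prod_const, Finset.prod_const, one_pow, mul_one, filter_le_card, pow_add]
    congr 1
    split <;> simp
  rw [Finset.prod_congr rfl hpt, Finset.prod_mul_distrib, Finset.prod_pow_eq_pow_sum,
    pow_add]
  congr 1
  rw [Finset.prod_ite (f := fun _ => (-1:ℝ)) (g := fun _ => (1:ℝ)),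
    Finset.prod_const, Finset.prod_const, one_pow, mul_one,
    Finset.filter_mem_eq_inter, Finset.inter_comm]


lemma sum_filter_lt (S : Finset (Fin n)) :
    ∑ t ∈ S, (S.filter fun s => t < s).card = S.card.choose 2 := by
  induction S using Finset.induction_on_max with
  | empty => simp
  | insert a S ha ih =>
    have haS : a ∉ S := fun h => lt_irrefl a (ha a h)
    rw [Finset.sum_insert haS]
    have h1 : ((insert a S).filter fun s => a < s).card = 0 := by
      rw [Finset.card_eq_zero, Finset.filter_eq_empty_iff]
      intro x hx
      rcases Finset.mem_insert.mp hx with rfl | hx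
      · exact lt_irrefl _
      · exact fun h => absurd (ha x hx) (not_lt.mpr h.le)
    have h2 : ∀ t ∈ S, ((insert a S).filter fun s => t < s).card
        = (S.filter fun s => t < s).card + 1 := by
      intro t ht
      rw [Finset.filter_insert, if_pos (ha t ht),
        Finset.card_insert_of_notMem (fun h => haS (Finset.mem_of_mem_filter _ h))]
    rw [h1, Finset.sum_congr rfl h2, Finset.sum_add_distrib, ih, Finset.sum_const,
      Finset.card_insert_of_notMem haS]
    simp [Nat.choose_succ_succ, Nat.choose_one_right]
    omega

lemma half_even {x A : ℕ} (h : x = A + A) : x / 2 = A := by omega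

lemma tri_eq (k : ℕ) : k.choose 2 + k = k * (k + 1) / 2 := by
  obtain ⟨m, hm⟩ := Nat.even_mul_succ_self k
  rw [half_even hm, Nat.choose_two_right]
  rcases k with _ | k
  · omega
  · obtain ⟨p, hp⟩ := Nat.even_mul_succ_self k
    have h1 : (k+1) * (k+1-1) = p + p := by
      simpa [Nat.mul_comm] using hp
    rw [half_even h1]
    have h2 : (k+1) * (k+1+1) = k*(k+1) + 2*(k+1) := by ring
    omega

noncomputable def sgn (S : Finset (Fin n)) : ℝ := (-1:ℝ) ^ (S.card * (S.card + 1) / 2)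

lemma neg_one_pow_eq_of_even_add {a b : ℕ} (h : Even (a + b)) : ((-1:ℝ))^a = (-1)^b := by
  rcases Nat.even_or_odd a with ha | ha <;> rcases Nat.even_or_odd b with hb | hb
  · rw [ha.neg_one_pow, hb.neg_one_pow]
  · exact absurd h (by simp [Nat.even_add, Nat.odd_iff, Nat.even_iff] at ha hb ⊢; omega)
  · exact absurd h (by simp [Nat.even_add, Nat.odd_iff, Nat.even_iff] at ha hb ⊢; omega)
  · rw [ha.neg_one_pow, hb.neg_one_pow]

lemma card_symmDiff_add (A B : Finset (Fin n)) :
    (symmDiff A B).card + 2 * (A ∩ B).card = A.card + B.card := by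
  have hsd : symmDiff A B = (A \ B) ∪ (B \ A) := by
    ext x; simp [Finset.mem_symmDiff, Finset.mem_union, Finset.mem_sdiff]
  rw [hsd, Finset.card_union_of_disjoint (disjoint_sdiff_sdiff)]
  have h1 := Finset.card_sdiff_add_card_inter A B
  have h2 := Finset.card_sdiff_add_card_inter B A
  rw [Finset.inter_comm B A] at h2
  omega

lemma parity_key (t v m A B C : ℕ) (hm1 : m ≤ t) (hm2 : m ≤ v)
    (hA : t*(t+1) = A + A) (hB : (t + v - 2*m)*((t + v - 2*m)+1) = B + B)
    (hC : v*(v+1) = C + C) :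
    Even (A + B + C + m + v*t) := by
  refine ⟨A + C + (t-m)*(v-m), ?_⟩
  have h2m : 2*m ≤ t + v := by omega
  qify [hm1, hm2, h2m] at hA hB hC ⊢
  linear_combination (1/2 : ℚ) * hA - (1/2 : ℚ) * hB + (1/2 : ℚ) * hC

lemma sgn_mul_sgn_symmDiff (T V : Finset (Fin n)) :
    sgn T * sgn (symmDiff T V)
      = sgn V * (-1:ℝ) ^ ((V ∩ T).card + V.card * T.card) := by
  obtain ⟨A, hA⟩ := Nat.even_mul_succ_self T.card
  obtain ⟨B, hB⟩ := Nat.even_mul_succ_self (symmDiff T V).card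
  obtain ⟨C, hC⟩ := Nat.even_mul_succ_self V.card
  have hcard := card_symmDiff_add T V
  have hm1 : (T ∩ V).card ≤ T.card := Finset.card_le_card (Finset.inter_subset_left)
  have hm2 : (T ∩ V).card ≤ V.card := Finset.card_le_card (Finset.inter_subset_right)
  unfold sgn
  rw [half_even hA, half_even hB, half_even hC, ← pow_add, ← pow_add]
  apply neg_one_pow_eq_of_even_add
  have hB' : (T.card + V.card - 2*(T ∩ V).card) * ((T.card + V.card - 2*(T ∩ V).card) + 1)
      = B + B := by
    have : T.card + V.card - 2*(T ∩ V).card = (symmDiff T V).card := by omega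
    rw [this]; exact hB
  obtain ⟨K, hK⟩ := parity_key T.card V.card (T ∩ V).card A B C hm1 hm2 hA hB' hC
  have hVT : (V ∩ T).card = (T ∩ V).card := by rw [Finset.inter_comm]
  exact ⟨K, by omega⟩

lemma esign_swap (A B : Finset (Fin n)) :
    esign A B * esign B A = (-1:ℝ) ^ (A.card * B.card) * (-1:ℝ) ^ ((A ∩ B).card) := by
  unfold esign
  rw [Finset.prod_comm (s := B) (t := A)]
  rw [← Finset.prod_mul_distrib]
  have hpt : ∀ s ∈ A, (∏ t ∈ B, (if t ≤ s then (-1:ℝ) else 1))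
        * (∏ t ∈ B, (if s ≤ t then (-1:ℝ) else 1))
      = (-1:ℝ) ^ B.card * (if s ∈ B then (-1:ℝ) else 1) := by
    intro s _
    rw [← Finset.prod_mul_distrib]
    have : ∀ t ∈ B, (if t ≤ s then (-1:ℝ) else 1) * (if s ≤ t then (-1:ℝ) else 1)
        = (-1:ℝ) * (if t = s then (-1:ℝ) else 1) := by
      intro t _
      rcases lt_trichotomy t s with h | rfl | h
      · rw [if_pos h.le, if_neg (not_le.mpr h), if_neg h.ne]
      · simp
      · rw [if_neg (not_le.mpr h), if_pos h.le, if_neg h.ne']; norm_num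
    rw [Finset.prod_congr rfl this, Finset.prod_mul_distrib, Finset.prod_const,
      Finset.prod_ite_eq' B s (fun _ => (-1:ℝ))]
  rw [Finset.prod_congr rfl hpt, Finset.prod_mul_distrib, Finset.prod_const, ← pow_mul]
  congr 1
  · rw [Nat.mul_comm]
  · rw [Finset.prod_ite (f := fun _ => (-1:ℝ)) (g := fun _ => (1:ℝ)),
      Finset.prod_const, Finset.prod_const, one_pow, mul_one, Finset.filter_mem_eq_inter]

lemma sgn_empty : sgn (∅ : Finset (Fin n)) = 1 := by simp [sgn]

lemma csign_self (S : Finset (Fin n)) : csign S S = sgn S := by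
  unfold csign sgn
  rw [sum_filter_lt, Finset.inter_self, tri_eq]

lemma scalar_key (x y z w p q sT sT' sV : ℝ) (u : ℝ)
    (hx : x * x = 1) (hw : w * w = 1)
    (hswap : z * w = p * q)
    (hsgn : sT * sT' = sV * (q * p))
    (hsV : sV * sV = 1) :
    x * ((x * y) * (z * u)) = ((y * u) * sV) * (sT' * (sT * w)) := by
  have hz2 : z = p * q * w := by linear_combination w * hswap - z * hw
  linear_combination (y * z * u) * hx + (y * u) * hz2
    - (y * u * w * sV) * hsgn - (y * u * w * p * q) * hsV

lemma key (S S' T : Finset (Fin n)) :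
    csign S T * csign S' (symmDiff T (symmDiff S S')) =
      (esign S' (symmDiff S S') * sgn (symmDiff S S')) *
        (sgn (symmDiff T (symmDiff S S')) * csign T (symmDiff T (symmDiff S S'))) := by
  set V := symmDiff S S' with hV
  have hS' : S' = symmDiff S V := by rw [hV, symmDiff_symmDiff_cancel_left]
  rw [csign_eq_esign, csign_eq_esign, csign_eq_esign]
  rw [hS', esign_symmDiff_left S V (symmDiff T V), esign_symmDiff_right S T V,
    esign_symmDiff_right V T V, esign_symmDiff_left S V V,
    esign_symmDiff_right T T V]
  have hTT : esign T T = sgn T := by rw [← csign_eq_esign, csign_self]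
  rw [hTT]
  have h3 := sgn_mul_sgn_symmDiff T V
  rw [pow_add] at h3
  exact scalar_key (esign S T) (esign S V) (esign V T) (esign T V)
    ((-1:ℝ) ^ (V.card * T.card)) ((-1:ℝ) ^ ((V ∩ T).card)) (sgn T) (sgn (symmDiff T V))
    (sgn V) (esign V V) (esign_mul_self S T) (esign_mul_self T V) (esign_swap V T) h3
    (by unfold sgn; rw [← pow_add]; exact (Even.add_self _).neg_one_pow)

lemma sd_iff (S S' T T' : Finset (Fin n)) :
    symmDiff S' T' = symmDiff S T ↔ T' = symmDiff T (symmDiff S S') := by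
  constructor
  · intro h
    have h2 : T' = symmDiff S' (symmDiff S T) := by
      rw [← h, symmDiff_symmDiff_cancel_left]
    rw [h2, symmDiff_comm S' (symmDiff S T), symmDiff_comm S T, symmDiff_assoc]
  · rintro rfl
    rw [symmDiff_comm T (symmDiff S S'), ← symmDiff_assoc, symmDiff_comm S S',
      symmDiff_symmDiff_cancel_left]

lemma sd_iff2 (T T' V : Finset (Fin n)) :
    symmDiff T T' = V ↔ T' = symmDiff T V := by
  constructor
  · rintro rfl; rw [symmDiff_symmDiff_cancel_left]
  · rintro rfl; rw [symmDiff_symmDiff_cancel_left]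

lemma cmul_cconj_apply (b : CliffAlg n) (V : Finset (Fin n)) :
    cmul b (cconj b) V
      = ∑ T : Finset (Fin n),
          b T * (sgn (symmDiff T V) * b (symmDiff T V)) * csign T (symmDiff T V) := by
  unfold cmul
  refine Finset.sum_congr rfl fun T _ => ?_
  have : ∀ T' : Finset (Fin n),
      (if symmDiff T T' = V then b T * cconj b T' * csign T T' else 0)
        = (if T' = symmDiff T V then b T * cconj b T' * csign T T' else 0) := by
    intro T'; rw [if_congr (sd_iff2 T T' V) rfl rfl]
  rw [Finset.sum_congr rfl fun T' _ => this T', Finset.sum_ite_eq' Finset.univ]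
  simp [cconj, sgn]

theorem main_sum (a b : CliffAlg n)
    (hb : cmul b (cconj b) = (cnorm b ^ 2) • (cone : CliffAlg n)) :
    (∑ U : Finset (Fin n), (cmul a b) U ^ 2)
      = (∑ S : Finset (Fin n), a S ^ 2) * cnorm b ^ 2 := by
  calc
    (∑ U : Finset (Fin n), (cmul a b) U ^ 2)
        = ∑ U : Finset (Fin n), ∑ S : Finset (Fin n), ∑ S' : Finset (Fin n),
            ∑ T : Finset (Fin n), ∑ T' : Finset (Fin n),
            (if symmDiff S T = U then a S * b T * csign S T else 0) *
              (if symmDiff S' T' = U then a S' * b T' * csign S' T' else 0) := by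
      refine Finset.sum_congr rfl fun U _ => ?_
      rw [sq]
      unfold cmul
      rw [Finset.sum_mul_sum]
      refine Finset.sum_congr rfl fun S _ => Finset.sum_congr rfl fun S' _ => ?_
      rw [Finset.sum_mul_sum]
    _ = ∑ S : Finset (Fin n), ∑ S' : Finset (Fin n), ∑ T : Finset (Fin n),
            ∑ T' : Finset (Fin n), ∑ U : Finset (Fin n),
            (if symmDiff S T = U then a S * b T * csign S T else 0) *
              (if symmDiff S' T' = U then a S' * b T' * csign S' T' else 0) := by
      rw [Finset.sum_comm]
      refine Finset.sum_congr rfl fun S _ => ?_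
      rw [Finset.sum_comm]
      refine Finset.sum_congr rfl fun S' _ => ?_
      rw [Finset.sum_comm]
      refine Finset.sum_congr rfl fun T _ => ?_
      rw [Finset.sum_comm]
    _ = ∑ S : Finset (Fin n), ∑ S' : Finset (Fin n), ∑ T : Finset (Fin n),
            (a S * b T * csign S T) *
              (a S' * b (symmDiff T (symmDiff S S')) *
                csign S' (symmDiff T (symmDiff S S'))) := by
      refine Finset.sum_congr rfl fun S _ => Finset.sum_congr rfl fun S' _ =>
        Finset.sum_congr rfl fun T _ => ?_
      have hU : ∀ T' : Finset (Fin n),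
          (∑ U : Finset (Fin n),
            (if symmDiff S T = U then a S * b T * csign S T else 0) *
              (if symmDiff S' T' = U then a S' * b T' * csign S' T' else 0))
          = (if T' = symmDiff T (symmDiff S S') then
              (a S * b T * csign S T) * (a S' * b T' * csign S' T') else 0) := by
        intro T'
        simp only [ite_mul, zero_mul, mul_ite, mul_zero]
        rw [Finset.sum_ite_eq Finset.univ, if_pos (Finset.mem_univ _),
          if_congr (eq_comm.trans (sd_iff S S' T T')) rfl rfl]
      rw [Finset.sum_congr rfl fun T' _ => hU T', Finset.sum_ite_eq' Finset.univ,
        if_pos (Finset.mem_univ _)]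
    _ = ∑ S : Finset (Fin n), ∑ S' : Finset (Fin n),
          (a S * a S') * (esign S' (symmDiff S S') * sgn (symmDiff S S')) *
            cmul b (cconj b) (symmDiff S S') := by
      refine Finset.sum_congr rfl fun S _ => Finset.sum_congr rfl fun S' _ => ?_
      rw [cmul_cconj_apply, Finset.mul_sum]
      refine Finset.sum_congr rfl fun T _ => ?_
      have hk := key S S' T
      linear_combination (a S * a S' * b T * b (symmDiff T (symmDiff S S'))) * hk
    _ = (∑ S : Finset (Fin n), a S ^ 2) * cnorm b ^ 2 := by
      rw [hb]
      have hpt : ∀ S S' : Finset (Fin n),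
          (a S * a S') * (esign S' (symmDiff S S') * sgn (symmDiff S S')) *
              ((cnorm b ^ 2) • (cone : CliffAlg n)) (symmDiff S S')
          = (if S' = S then a S * a S' * cnorm b ^ 2 else 0) := by
        intro S S'
        by_cases h : S' = S
        · subst h
          simp [cone, esign_empty_right, sgn_empty, symmDiff_self, bot_eq_empty,
            Pi.smul_apply, smul_eq_mul]
        · have h2 : symmDiff S S' ≠ ∅ := by
            intro hc
            exact h (Finset.symmDiff_eq_empty.mp hc).symm
          simp only [Pi.smul_apply, smul_eq_mul, cone, if_neg h2, if_neg h, mul_zero]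
      rw [Finset.sum_congr rfl fun S _ => Finset.sum_congr rfl fun S' _ => hpt S S']
      rw [Finset.sum_mul]
      refine Finset.sum_congr rfl fun S _ => ?_
      rw [Finset.sum_ite_eq' Finset.univ, if_pos (Finset.mem_univ _), sq]
      ring

theorem cnorm_cmul_of_self_mul_conj' (a b : CliffAlg n)
    (hb : cmul b (cconj b) = (cnorm b ^ 2) • (cone : CliffAlg n)) :
    cnorm (cmul a b) = cnorm a * cnorm b := by
  unfold cnorm
  rw [show (∑ U : Finset (Fin n), (cmul a b) U ^ 2)
      = (∑ S : Finset (Fin n), a S ^ 2) * cnorm b ^ 2 from main_sum a b hb]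
  rw [Real.sqrt_mul (by positivity)]
  have h0 : (0:ℝ) ≤ cnorm b := Real.sqrt_nonneg _
  rw [Real.sqrt_sq h0]
  rfl

/-- If `b b̄ = |b|²` (as a Clifford number), then `|a b| = |a| |b|` for every `a`. -/
theorem cnorm_cmul_of_self_mul_conj (n : ℕ) (a b : CliffAlg n)
    (hb : cmul b (cconj b) = (cnorm b ^ 2) • (cone : CliffAlg n)) :
    cnorm (cmul a b) = cnorm a * cnorm b := by
  exact cnorm_cmul_of_self_mul_conj' a b hb
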